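/- arXiv:math/0501399 — 4 statements merged into one kernel-verified Lean document; each statement's English description precedes it below -/
import Mathlib

section
/- Let A be an Azumaya algebra over a commutative Noetherian ring R, and let I be a right ideal of A such that A/I is a projective R-module. Then there exists an idempotent element e in I such that I = eA. -/
open TensorProduct in
/-- The natural `R`-bilinear map `A → Aᵐᵒᵖ → End_R A`, `a ⊗ bᵒᵖ ↦ (x ↦ a * x * b)`. -/
noncomputable def azumayaMulMap (R A : Type*) [CommRing R] [Ring A] [Algebra R A] :
    A ⊗[R] Aᵐᵒᵖ →ₗ[R] Module.End R A :=
  TensorProduct.lift <| LinearMap.mk₂ R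
    (fun (a : A) (b : Aᵐᵒᵖ) =>
      (LinearMap.mulRight R (MulOpposite.unop b)).comp (LinearMap.mulLeft R a))
    (fun a a' b => by ext x; simp [add_mul])
    (fun c a b => by ext x; simp [smul_mul_assoc])
    (fun a b b' => by ext x; simp [mul_add])
    (fun c a b => by ext x; simp [mul_smul_comm])

/-- `A` is an Azumaya algebra over `R`: finitely generated, projective and faithful
as an `R`-module, and the natural map `A ⊗[R] Aᵐᵒᵖ → End_R A` is bijective. -/
structure IsAzumayaAlgebra (R A : Type*) [CommRing R] [Ring A] [Algebra R A] : Prop where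
  finite : Module.Finite R A
  projective : Module.Projective R A
  faithful : FaithfulSMul R A
  bij : Function.Bijective (azumayaMulMap R A)

open MulOpposite in
theorem exists_functional_one (R A : Type*) [CommRing R] [Ring A] [Algebra R A]
    (hfin : Module.Finite R A) (hp : Module.Projective R A) (hf : FaithfulSMul R A) :
    ∃ t : A →ₗ[R] R, t 1 = 1 := by
  classical
  set S : Set R := Set.range (fun p : (A →ₗ[R] R) × A => p.1 p.2) with hS
  set T : Ideal R := Submodule.span R S with hTdef
  obtain ⟨s, hs⟩ := Module.projective_def'.mp hp
  have hT : (⊤ : Submodule R A) ≤ T • ⊤ := by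
    intro x _
    have hx : x = (s x).sum (fun m r => r • m) := by
      conv_lhs => rw [← LinearMap.id_apply (R := R) x, ← hs]
      simp [Finsupp.linearCombination_apply]
    rw [hx]
    refine Submodule.sum_mem _ (fun m hm => Submodule.smul_mem_smul ?_ trivial)
    exact Submodule.subset_span ⟨(⟨(Finsupp.lapply m).comp s, x⟩), rfl⟩
  obtain ⟨r, hr1, hr0⟩ :=
    Submodule.exists_sub_one_mem_and_smul_eq_zero_of_fg_of_le_smul T ⊤ hfin.fg_top hT
  have hr : r = 0 := by
    refine hf.eq_of_smul_eq_smul (fun m : A => ?_)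
    rw [hr0 m trivial, zero_smul]
  have h1 : (1 : R) ∈ T := by
    have : r - 1 ∈ T := hr1
    rw [hr, zero_sub] at this
    simpa using T.neg_mem this
  obtain ⟨l, hsum⟩ := (Finsupp.mem_span_iff_linearCombination R S 1).mp h1
  have hmem : ∀ s : S, ∃ p : (A →ₗ[R] R) × A, p.1 p.2 = (s : R) := fun s => s.2
  choose p hp' using hmem
  refine ⟨l.sum (fun s c => c • ((p s).1.comp (LinearMap.mulRight R (p s).2))), ?_⟩
  rw [← hsum, Finsupp.linearCombination_apply]
  simp only [Finsupp.sum, LinearMap.sum_apply, LinearMap.smul_apply, LinearMap.comp_apply,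
    LinearMap.mulRight_apply, one_mul, hp']

open TensorProduct MulOpposite in
/-- Let `A` be an Azumaya algebra over a commutative Noetherian ring `R`, and `I`
a right ideal of `A` such that `A/I` is a projective `R`-module.  Then there is an
idempotent `e ∈ I` with `I = eA`. -/
theorem stmt_0 (R A : Type*) [CommRing R] [IsNoetherianRing R] [Ring A] [Algebra R A]
    (hAz : IsAzumayaAlgebra R A) (I : Submodule Aᵐᵒᵖ A)
    (hproj : Module.Projective R (A ⧸ I.restrictScalars R)) :
    ∃ e ∈ I, e * e = e ∧ ∀ x : A, x ∈ I ↔ ∃ a : A, x = e * a := by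
  classical
  obtain ⟨t, ht⟩ := exists_functional_one R A hAz.finite hAz.projective hAz.faithful
  set μ := azumayaMulMap R A with hμdef
  have hμtmul : ∀ (x : A) (w : Aᵐᵒᵖ) (z : A), μ (x ⊗ₜ[R] w) z = x * z * unop w := by
    intro x w z
    simp [hμdef, azumayaMulMap]
  set s : Module.End R A := (Algebra.linearMap R A) ∘ₗ t with hsdef
  set E := LinearEquiv.ofBijective μ hAz.bij with hE
  set e : A ⊗[R] Aᵐᵒᵖ := E.symm s with hedef
  have hμe : μ e = s := by
    have := E.apply_symm_apply s
    rwa [hE, LinearEquiv.ofBijective_apply] at this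
  -- key tensor identity
  have key : ∀ a : A, LinearMap.rTensor Aᵐᵒᵖ (LinearMap.mulLeft R a) e
      = LinearMap.lTensor A (LinearMap.mulLeft R (op a)) e := by
    intro a
    apply hAz.bij.injective
    have comp1 : μ ∘ₗ LinearMap.rTensor Aᵐᵒᵖ (LinearMap.mulLeft R a)
        = LinearMap.llcomp R A A A (LinearMap.mulLeft R a) ∘ₗ μ := by
      apply TensorProduct.ext'
      intro x w
      ext z
      simp [hμtmul, mul_assoc]
    have comp2 : μ ∘ₗ LinearMap.lTensor A (LinearMap.mulLeft R (op a))
        = LinearMap.llcomp R A A A (LinearMap.mulRight R a) ∘ₗ μ := by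
      apply TensorProduct.ext'
      intro x w
      ext z
      simp [hμtmul, mul_assoc]
    have h1 : μ (LinearMap.rTensor Aᵐᵒᵖ (LinearMap.mulLeft R a) e)
        = LinearMap.mulLeft R a ∘ₗ s := by
      have := LinearMap.congr_fun comp1 e
      simpa [hμe, LinearMap.llcomp_apply'] using this
    have h2 : μ (LinearMap.lTensor A (LinearMap.mulLeft R (op a)) e)
        = LinearMap.mulRight R a ∘ₗ s := by
      have := LinearMap.congr_fun comp2 e
      simpa [hμe, LinearMap.llcomp_apply'] using this
    rw [h1, h2]
    ext z
    simp [hsdef, Algebra.commutes]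
  -- the R-linear splitting of the quotient map
  haveI := hproj
  obtain ⟨σ', hσ'⟩ := Module.projective_lifting_property ((I.restrictScalars R).mkQ)
    LinearMap.id (Submodule.mkQ_surjective _)
  set Eq := Submodule.Quotient.restrictScalarsEquiv R I with hEq
  set σ0 : (A ⧸ I) →ₗ[R] A := σ' ∘ₗ (Eq.symm : (A ⧸ I) →ₗ[R] A ⧸ I.restrictScalars R) with hσ0def
  have hmkQ : ∀ x : A, I.mkQ x = Eq ((I.restrictScalars R).mkQ x) := fun x => rfl
  have hσ0 : ∀ m : A ⧸ I, I.mkQ (σ0 m) = m := by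
    intro m
    have h := LinearMap.congr_fun hσ' (Eq.symm m)
    simp only [LinearMap.comp_apply, LinearMap.id_apply] at h
    rw [hmkQ, hσ0def]
    simp only [LinearMap.comp_apply, LinearEquiv.coe_coe]
    rw [h]
    simp
  -- the bilinear maps
  set B : (A ⧸ I) → (A →ₗ[R] Aᵐᵒᵖ →ₗ[R] A) := fun m => LinearMap.mk₂ R
    (fun x w => σ0 (op x • m) * unop w)
    (fun x x' w => by simp [op_add, add_smul, add_mul])
    (fun r x w => by
      rw [MulOpposite.op_smul, smul_assoc, map_smul, smul_mul_assoc])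
    (fun x w w' => by simp [mul_add])
    (fun r x w => by
      rw [MulOpposite.unop_smul, mul_smul_comm]) with hBdef
  set τ : (A ⧸ I) → A := fun m => TensorProduct.lift (B m) e with hτdef
  -- right `A`-linearity of `τ`
  have hT2 : ∀ (m : A ⧸ I) (a : A), τ (op a • m) = τ m * a := by
    intro m a
    have step1 : TensorProduct.lift (B (op a • m))
        = TensorProduct.lift (B m) ∘ₗ LinearMap.rTensor Aᵐᵒᵖ (LinearMap.mulLeft R a) := by
      apply TensorProduct.ext'
      intro x w
      simp only [TensorProduct.lift.tmul, LinearMap.comp_apply, LinearMap.rTensor_tmul,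
        LinearMap.mulLeft_apply, hBdef, LinearMap.mk₂_apply]
      rw [smul_smul, ← op_mul]
    have step3 : TensorProduct.lift (B m) ∘ₗ LinearMap.lTensor A (LinearMap.mulLeft R (op a))
        = LinearMap.mulRight R a ∘ₗ TensorProduct.lift (B m) := by
      apply TensorProduct.ext'
      intro x w
      simp only [TensorProduct.lift.tmul, LinearMap.comp_apply, LinearMap.lTensor_tmul,
        LinearMap.mulLeft_apply, hBdef, LinearMap.mk₂_apply, LinearMap.mulRight_apply,
        unop_mul, unop_op]
      rw [mul_assoc]
    calc τ (op a • m) = TensorProduct.lift (B m)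
          (LinearMap.rTensor Aᵐᵒᵖ (LinearMap.mulLeft R a) e) := by
            rw [hτdef]; exact LinearMap.congr_fun step1 e
      _ = TensorProduct.lift (B m) (LinearMap.lTensor A (LinearMap.mulLeft R (op a)) e) := by
            rw [key]
      _ = τ m * a := by
            have := LinearMap.congr_fun step3 e
            simpa [hτdef] using this
  -- `τ` is a section of the quotient map
  have hT1 : ∀ m : A ⧸ I, I.mkQ (τ m) = m := by
    intro m
    set actm : A →ₗ[R] A ⧸ I :=
      { toFun := fun a => op a • m
        map_add' := fun a b => by simp [op_add, add_smul]
        map_smul' := fun r a => by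
          simp only [RingHom.id_apply, MulOpposite.op_smul, smul_assoc] } with hactm
    set ev1 : Module.End R A →ₗ[R] A :=
      { toFun := fun g => g 1
        map_add' := fun f g => rfl
        map_smul' := fun r f => rfl } with hev1
    have stepA : (LinearMap.restrictScalars R I.mkQ) ∘ₗ TensorProduct.lift (B m)
        = actm ∘ₗ (ev1 ∘ₗ μ) := by
      apply TensorProduct.ext'
      intro x w
      simp only [LinearMap.comp_apply, TensorProduct.lift.tmul, hBdef, LinearMap.mk₂_apply,
        LinearMap.restrictScalars_apply, hactm, hev1, LinearMap.coe_mk, AddHom.coe_mk]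
      have h1 : σ0 (op x • m) * unop w = w • σ0 (op x • m) := (MulOpposite.smul_eq_mul_unop w _).symm
      rw [h1, map_smul, hσ0, smul_smul, hμtmul, mul_one, op_mul, op_unop]
    have h2 := LinearMap.congr_fun stepA e
    simp only [LinearMap.comp_apply, LinearMap.restrictScalars_apply, hμe] at h2
    rw [hτdef]
    rw [h2]
    simp [hsdef, hactm, hev1, ht, Algebra.algebraMap_eq_smul_one]
  -- conclusion
  set q : A ⧸ I := I.mkQ 1 with hq
  set e0 : A := 1 - τ q with he0def
  have hmkq : ∀ x : A, I.mkQ x = op x • q := by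
    intro x
    rw [hq, ← map_smul]
    simp [show op x • (1 : A) = 1 * x from rfl]
  have hmain : ∀ x : A, e0 * x = x - τ (I.mkQ x) := by
    intro x
    rw [he0def, sub_mul, one_mul, ← hT2 q x, ← hmkq]
  have hτzero : τ 0 = 0 := by
    have hB0 : B (0 : A ⧸ I) = 0 := by
      ext x w
      simp [hBdef]
    have hlift : TensorProduct.lift (0 : A →ₗ[R] Aᵐᵒᵖ →ₗ[R] A) = 0 := by
      apply TensorProduct.ext'
      intro x w
      simp
    rw [hτdef]
    simp only [hB0, hlift, LinearMap.zero_apply]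
  have hIe : ∀ x ∈ I, e0 * x = x := by
    intro x hx
    rw [hmain x, show I.mkQ x = 0 from (Submodule.Quotient.mk_eq_zero I).mpr hx, hτzero, sub_zero]
  have he0mem : e0 ∈ I := by
    rw [← Submodule.Quotient.mk_eq_zero I]
    have : I.mkQ e0 = 0 := by
      rw [he0def, map_sub, hT1]
      exact sub_self q
    exact this
  refine ⟨e0, he0mem, hIe e0 he0mem, fun x => ⟨fun hx => ⟨x, (hIe x hx).symm⟩, ?_⟩⟩
  rintro ⟨a, rfl⟩
  have : I.mkQ (e0 * a) = 0 := by
    rw [hmain a, map_sub, hT1, sub_self]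
  exact (Submodule.Quotient.mk_eq_zero I).mp this
end

section
/- Let p be a prime and let n, m be powers of p. Then the multinomial coefficient (nm)! / ((n!)^m · m!) is not divisible by p. -/
lemma digits_sum_pow {p : ℕ} (hp : 1 < p) (k : ℕ) : (p.digits (p ^ k)).sum = 1 := by
  rw [show p ^ k = p ^ k * 1 by ring, Nat.digits_base_pow_mul hp one_pos]
  have : p.digits 1 = [1] := Nat.digits_def' hp one_pos ▸ by
    simp [Nat.digits_def' hp one_pos, Nat.mod_eq_of_lt hp, Nat.div_eq_of_lt hp]
  simp [this]

lemma vfact {p : ℕ} [hp : Fact p.Prime] (k : ℕ) :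
    (p - 1) * padicValNat p (Nat.factorial (p ^ k)) = p ^ k - 1 := by
  rw [sub_one_mul_padicValNat_factorial, digits_sum_pow hp.out.one_lt]

/-- Let `p` be a prime and `n, m` powers of `p`.  Then the multinomial coefficient
`(nm)! / ((n!)^m * m!)` is not divisible by `p`. -/
theorem stmt_5 (p a b n m : ℕ) (hp : p.Prime) (hn : n = p ^ a) (hm : m = p ^ b) :
    ¬ p ∣ Nat.factorial (n * m) / (Nat.factorial n ^ m * Nat.factorial m) := by
  haveI : Fact p.Prime := ⟨hp⟩
  subst hn; subst hm
  set n := p ^ a with hn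
  set m := p ^ b with hm
  have hn0 : n ≠ 0 := pow_ne_zero _ hp.pos.ne'
  have hquot : Nat.factorial (n * m) / (Nat.factorial n ^ m * Nat.factorial m)
      = Nat.uniformBell m n := by
    rw [Nat.uniformBell_eq_div m hn0, mul_comm n m]
  rw [hquot]
  have key := Nat.uniformBell_mul_eq m hn0
  have hbell0 : Nat.uniformBell m n ≠ 0 := by
    intro h0
    rw [h0] at key
    simp at key
    exact Nat.factorial_ne_zero (m * n) key.symm
  have hval : padicValNat p (Nat.uniformBell m n) + m * padicValNat p (Nat.factorial n)
      + padicValNat p (Nat.factorial m) = padicValNat p (Nat.factorial (m * n)) := by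
    rw [← key, padicValNat.mul (by positivity) (Nat.factorial_ne_zero m),
      padicValNat.mul hbell0 (by positivity), padicValNat.pow]
  have h1 : (p - 1) * padicValNat p (Nat.factorial n) = n - 1 := vfact a
  have h2 : (p - 1) * padicValNat p (Nat.factorial m) = m - 1 := vfact b
  have h3 : (p - 1) * padicValNat p (Nat.factorial (m * n)) = p ^ (a + b) - 1 := by
    rw [hm, hn, ← pow_add, add_comm b a]; exact vfact (a + b)
  have hmul : (p - 1) * (padicValNat p (Nat.uniformBell m n)
      + m * padicValNat p (Nat.factorial n) + padicValNat p (Nat.factorial m))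
      = (p - 1) * padicValNat p (Nat.factorial (m * n)) := by rw [hval]
  have hexp : m * (n - 1) = p ^ (a + b) - p ^ b := by
    rw [hm, hn, Nat.mul_sub_one, pow_add, mul_comm (p ^ a)]
  rw [Nat.mul_add, Nat.mul_add, ← Nat.mul_assoc, Nat.mul_comm (p-1) m, Nat.mul_assoc,
    h1, h2, h3, hexp] at hmul
  have hple : p ^ b ≤ p ^ (a + b) := Nat.pow_le_pow_right hp.pos (Nat.le_add_left b a)
  have hb1 : 1 ≤ p ^ b := Nat.one_le_pow _ _ hp.pos
  have hp2 : 2 ≤ p := hp.two_le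
  have hv0 : padicValNat p (Nat.uniformBell m n) = 0 := by
    have hz : (p - 1) * padicValNat p (Nat.uniformBell m n) = 0 := by omega
    rcases Nat.mul_eq_zero.mp hz with h | h
    · omega
    · exact h
  intro hdvd
  have := one_le_padicValNat_of_dvd hbell0 hdvd
  omega
end

section
/- Let A be a central simple algebra over a field F with an involution σ of the first kind, and let I be a right ideal of A that is regular with respect to σ (i.e., A = I ⊕ I^⊥ where I^⊥ = {a ∈ A : σ(I)·a = 0}). Write I = eA with 1 = e + f, e ∈ I, f ∈ I^⊥. Then σ(e) = e. -/
/-- Let `A` be a central simple algebra over a field `F` with an involution `σ` of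
the first kind, and `I` a right ideal that is regular with respect to `σ`
(`A = I ⊕ I^⊥` where `I^⊥ = {a : σ(I)·a = 0}`).  Writing `1 = e + f` with `e ∈ I`,
`f ∈ I^⊥`, we have `σ(e) = e`. -/
theorem stmt_8 (F A : Type*) [Field F] [Ring A] [Algebra F A] [FiniteDimensional F A]
    [Algebra.IsCentral F A] [IsSimpleRing A]
    (σ : A → A)
    (hadd : ∀ x y, σ (x + y) = σ x + σ y)
    (hmul : ∀ x y, σ (x * y) = σ y * σ x)
    (hinv : ∀ x, σ (σ x) = x)
    (hlin : ∀ (c : F) (x : A), σ (c • x) = c • σ x)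
    (I : Submodule Aᵐᵒᵖ A)
    -- I^⊥ is the right annihilator of σ(I)
    (perp : Set A) (hperp : perp = {a : A | ∀ x ∈ I, σ x * a = 0})
    -- A = I ⊕ I^⊥ :
    (hspan : ∀ a : A, ∃ x ∈ I, ∃ y ∈ perp, a = x + y)
    (hindep : ∀ x : A, x ∈ I → x ∈ perp → x = 0)
    (e f : A) (he : e ∈ I) (hf : f ∈ perp) (hef : e + f = 1) :
    σ e = e := by
  subst hperp
  have h1 : σ e * f = 0 := hf e he
  have h2 : σ e * e = σ e := by
    have : σ e * (e + f) = σ e := by rw [hef, mul_one]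
    rwa [mul_add, h1, add_zero] at this
  calc σ e = σ e * e := h2.symm
    _ = σ (σ e * e) := by rw [hmul, hinv]
    _ = σ (σ e) := by rw [h2]
    _ = e := hinv e
end

section
/- Let A be a ring with involution σ, L ⊆ A a commutative subring, and u ∈ A a unit such that u·l·u^{-1} = σ(l) for all l ∈ L. Set v = u + σ(u). Then v·l = σ(l)·v for all l ∈ L; consequently, if v is invertible, the involution τ = inn_{v^{-1}} ∘ σ fixes L pointwise. -/
/-- Let `A` be a ring with involution `σ`, `L ⊆ A` a commutative subring, and `u` a
unit with `u·l·u⁻¹ = σ(l)` for all `l ∈ L`.  Set `v = u + σ(u)`.  Then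
`v·l = σ(l)·v` for all `l ∈ L`; consequently, if `v` is invertible then the
involution `τ = inn_{v⁻¹} ∘ σ` fixes `L` pointwise. -/
theorem stmt_18 (A : Type*) [Ring A] (σ : A → A)
    (hadd : ∀ x y, σ (x + y) = σ x + σ y)
    (hmul : ∀ x y, σ (x * y) = σ y * σ x)
    (hinv : ∀ x, σ (σ x) = x)
    (L : Subring A) (hcomm : ∀ x ∈ L, ∀ y ∈ L, x * y = y * x)
    (u : Aˣ) (hu : ∀ l ∈ L, ↑u * l * ↑u⁻¹ = σ l)
    (v : A) (hv : v = ↑u + σ ↑u) :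
    (∀ l ∈ L, v * l = σ l * v) ∧
    (∀ w : Aˣ, (w : A) = v → ∀ l ∈ L, ↑w⁻¹ * σ l * ↑w = l) := by
  have hul : ∀ l ∈ L, (↑u : A) * l = σ l * ↑u := by
    intro l hl
    have := hu l hl
    calc (↑u : A) * l = ↑u * l * ↑u⁻¹ * ↑u := by
          rw [mul_assoc, Units.inv_mul, mul_one]
      _ = σ l * ↑u := by rw [this]
  have key : ∀ l ∈ L, v * l = σ l * v := by
    intro l hl
    have h2 : σ (↑u : A) * l = σ l * σ ↑u := by
      have := congrArg σ (hul l hl)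
      rw [hmul, hmul, hinv] at this
      exact this.symm
    rw [hv, add_mul, mul_add, hul l hl, h2]
  refine ⟨key, fun w hw l hl => ?_⟩
  have : (↑w : A) * l = σ l * ↑w := hw ▸ key l hl
  calc (↑w⁻¹ : A) * σ l * ↑w = ↑w⁻¹ * (σ l * ↑w) := by rw [mul_assoc]
    _ = ↑w⁻¹ * (↑w * l) := by rw [this]
    _ = l := by rw [← mul_assoc, Units.inv_mul, one_mul]
end
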